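/- Let A_1, …, A_n be a non-empty finite collection of events in a probability space (n ≥ 1). Then Pr(⋃_{i=1}^n A_i) ≥ (1/⌈n/2⌉) · ( Σ_{i=1}^n Pr(A_i) − (2/n) · Σ_{1≤i<j≤n} Pr(A_i ∩ A_j) ). -/

import Mathlib

open MeasureTheory Finset

private lemma split_sum_tri {n : ℕ} (f : Fin n → ℝ) (i : Fin n) :
    ∑ j, f j = (∑ j ∈ univ.filter (fun j => j < i), f j) + f i
      + ∑ j ∈ univ.filter (fun j => i < j), f j := by
  have h : ∀ j : Fin n, f j = (if j < i then f j else 0) + (if j = i then f j else 0)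
      + (if i < j then f j else 0) := by
    intro j
    rcases lt_trichotomy j i with h | h | h
    · simp [h, h.ne, asymm h]
    · subst h; simp
    · simp [h, h.ne', asymm h]
  calc ∑ j, f j = ∑ j, ((if j < i then f j else 0) + (if j = i then f j else 0)
        + (if i < j then f j else 0)) := Finset.sum_congr rfl fun j _ => h j
    _ = _ := by
        rw [Finset.sum_add_distrib, Finset.sum_add_distrib, Finset.sum_ite_eq' univ i f,
          ← Finset.sum_filter, ← Finset.sum_filter]
        simp

private lemma two_mul_pairs {n : ℕ} (x : Fin n → ℝ) :
    2 * ∑ i, ∑ j ∈ univ.filter (fun j => i < j), x i * x j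
      = (∑ i, x i) ^ 2 - ∑ i, x i ^ 2 := by
  have hswap : ∑ i, ∑ j ∈ univ.filter (fun j => j < i), x i * x j
      = ∑ i, ∑ j ∈ univ.filter (fun j => i < j), x i * x j := by
    simp_rw [Finset.sum_filter]
    rw [Finset.sum_comm]
    refine Finset.sum_congr rfl fun i _ => Finset.sum_congr rfl fun j _ => ?_
    split <;> ring
  have main : (∑ i, x i) ^ 2
      = (∑ i, ∑ j ∈ univ.filter (fun j => j < i), x i * x j) + (∑ i, x i ^ 2)
        + ∑ i, ∑ j ∈ univ.filter (fun j => i < j), x i * x j := by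
    rw [sq, Finset.sum_mul_sum]
    rw [← Finset.sum_add_distrib, ← Finset.sum_add_distrib]
    refine Finset.sum_congr rfl fun i _ => ?_
    have := split_sum_tri (fun j => x i * x j) i
    rw [this]; ring
  rw [main, hswap]; ring

theorem kwerel_lower_analogue {Ω : Type*} [MeasurableSpace Ω]
    (μ : Measure Ω) [IsProbabilityMeasure μ] (n : ℕ) (hn : 1 ≤ n)
    (A : Fin n → Set Ω) (hA : ∀ i, MeasurableSet (A i)) :
    (μ (⋃ i, A i)).toReal ≥
      (1 / (⌈(n : ℝ) / 2⌉₊ : ℝ)) *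
        (∑ i, (μ (A i)).toReal -
          (2 / (n : ℝ)) *
            ∑ i, ∑ j ∈ univ.filter (fun j => i < j), (μ (A i ∩ A j)).toReal) := by
  classical
  set m : ℕ := ⌈(n : ℝ) / 2⌉₊ with hmdef
  have hn0 : (0 : ℝ) < n := by positivity
  have hm1 : 1 ≤ m := by
    rw [hmdef]
    refine Nat.one_le_ceil_iff.mpr ?_
    positivity
  have hmpos : (0 : ℝ) < m := by exact_mod_cast hm1
  have hn2m : (n : ℝ) ≤ 2 * m := by
    have := Nat.le_ceil ((n : ℝ) / 2)
    rw [← hmdef] at this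
    linarith
  have h2mn : (2 * m : ℝ) ≤ n + 1 := by
    have h1 : ((m : ℝ)) < (n : ℝ) / 2 + 1 := by
      rw [hmdef]
      exact Nat.ceil_lt_add_one (by positivity)
    have h2 : 2 * m < n + 2 := by
      have : (2 * m : ℝ) < n + 2 := by push_cast; linarith
      exact_mod_cast this
    have : 2 * m ≤ n + 1 := by omega
    exact_mod_cast this
  -- indicator functions
  set x : Fin n → Ω → ℝ := fun i => (A i).indicator 1 with hxdef
  have hxint : ∀ i, Integrable (x i) μ := fun i => (integrable_const (1 : ℝ)).indicator (hA i)
  have hxij_int : ∀ i j : Fin n, Integrable ((A i ∩ A j).indicator (1 : Ω → ℝ)) μ :=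
    fun i j => (integrable_const (1 : ℝ)).indicator ((hA i).inter (hA j))
  have hUnion : MeasurableSet (⋃ i, A i) := MeasurableSet.iUnion hA
  have hU_int : Integrable ((⋃ i, A i).indicator (1 : Ω → ℝ)) μ :=
    (integrable_const (1 : ℝ)).indicator hUnion
  -- the integrand on the left
  set f : Ω → ℝ := fun ω => (∑ i, x i ω)
      - (2 / (n : ℝ)) * ∑ i, ∑ j ∈ univ.filter (fun j => i < j), (A i ∩ A j).indicator 1 ω
    with hfdef
  have hf_int : Integrable f μ := by
    apply Integrable.sub
    · exact integrable_finset_sum _ fun i _ => hxint i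
    · exact (integrable_finset_sum _ fun i _ =>
        integrable_finset_sum _ fun j _ => hxij_int i j).const_mul _
  -- pointwise inequality
  have hpt : ∀ ω, f ω ≤ (m : ℝ) * (⋃ i, A i).indicator 1 ω := by
    intro ω
    set t : ℕ := (univ.filter fun i => ω ∈ A i).card with htdef
    have hxval : ∀ i, x i ω = if ω ∈ A i then 1 else 0 := by
      intro i; simp [hxdef, Set.indicator_apply]
    have hc : ∑ i, x i ω = (t : ℝ) := by
      simp only [hxval]
      rw [Finset.sum_boole]
    have hxsq : ∀ i, x i ω ^ 2 = x i ω := by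
      intro i; rw [hxval]; split <;> norm_num
    have hq : ∑ i, ∑ j ∈ univ.filter (fun j => i < j), (A i ∩ A j).indicator 1 ω
        = ((t : ℝ) ^ 2 - t) / 2 := by
      have heq : ∀ i j : Fin n, (A i ∩ A j).indicator (1 : Ω → ℝ) ω = x i ω * x j ω := by
        intro i j
        rw [Set.inter_indicator_one]
        rfl
      simp_rw [heq]
      have h2 := two_mul_pairs (fun i => x i ω)
      simp_rw [hxsq, hc] at h2
      linarith
    by_cases hω : ω ∈ ⋃ i, A i
    · have ht1 : 1 ≤ t := by
        rcases Set.mem_iUnion.mp hω with ⟨i, hi⟩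
        exact Finset.card_pos.mpr ⟨i, Finset.mem_filter.mpr ⟨Finset.mem_univ i, hi⟩⟩
      have htn : t ≤ n := by
        calc t ≤ (univ : Finset (Fin n)).card := Finset.card_filter_le _ _
        _ = n := by simp
      have ht1R : (1 : ℝ) ≤ t := by exact_mod_cast ht1
      have htnR : (t : ℝ) ≤ n := by exact_mod_cast htn
      have hkey : ((t : ℝ) - m) * ((t : ℝ) - m - 1) ≥ 0 := by
        rcases le_or_gt t m with h | h
        · have h1 : (t : ℝ) ≤ m := by exact_mod_cast h
          nlinarith
        · have h1 : (m : ℝ) + 1 ≤ t := by exact_mod_cast h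
          apply mul_nonneg <;> linarith
      rw [Set.indicator_of_mem hω]
      simp only [hfdef, hc, hq, Pi.one_apply, mul_one]
      have hprod1 : ((t : ℝ) - 1) * (2 * m - n) ≥ 0 :=
        mul_nonneg (by linarith) (by linarith)
      have hprod2 : ((m : ℝ) - 1) * ((n : ℝ) - m) ≥ 0 := by
        have hmn : (m : ℝ) ≤ n := by
          have : (1 : ℝ) ≤ m := by exact_mod_cast hm1
          linarith
        have : (1 : ℝ) ≤ m := by exact_mod_cast hm1
        exact mul_nonneg (by linarith) (by linarith)
      have key2 : (t : ℝ) - 2 / (n : ℝ) * (((t : ℝ) ^ 2 - t) / 2)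
          = ((t : ℝ) * n - ((t : ℝ) ^ 2 - t)) / n := by
        field_simp
      rw [key2, div_le_iff₀ hn0]
      nlinarith [hkey, hprod1, hprod2]
    · have ht0 : t = 0 := by
        rw [htdef, Finset.card_eq_zero, Finset.filter_eq_empty_iff]
        intro i _
        exact fun hi => hω (Set.mem_iUnion.mpr ⟨i, hi⟩)
      rw [Set.indicator_of_notMem hω, hfdef]
      simp only [hc, hq, ht0, Nat.cast_zero, mul_zero]
      norm_num
  -- integrate
  have hmono : ∫ ω, f ω ∂μ ≤ ∫ ω, (m : ℝ) * (⋃ i, A i).indicator 1 ω ∂μ :=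
    integral_mono hf_int (hU_int.const_mul _) hpt
  have hL : ∫ ω, f ω ∂μ = (∑ i, (μ (A i)).toReal)
      - (2 / (n : ℝ)) * ∑ i, ∑ j ∈ univ.filter (fun j => i < j), (μ (A i ∩ A j)).toReal := by
    rw [hfdef]
    rw [integral_sub (integrable_finset_sum _ fun i _ => hxint i)
      ((integrable_finset_sum _ fun i _ =>
        integrable_finset_sum _ fun j _ => hxij_int i j).const_mul _)]
    rw [integral_finset_sum _ fun i _ => hxint i]
    rw [integral_const_mul]
    rw [integral_finset_sum _ fun i _ => integrable_finset_sum _ fun j _ => hxij_int i j]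
    congr 1
    · exact Finset.sum_congr rfl fun i _ => integral_indicator_one (hA i)
    · congr 1
      refine Finset.sum_congr rfl fun i _ => ?_
      rw [integral_finset_sum _ fun j _ => hxij_int i j]
      exact Finset.sum_congr rfl fun j _ => integral_indicator_one ((hA i).inter (hA j))
  have hR : ∫ ω, (m : ℝ) * (⋃ i, A i).indicator 1 ω ∂μ = m * (μ (⋃ i, A i)).toReal := by
    rw [integral_const_mul, integral_indicator_one hUnion]
    rfl
  rw [hL, hR] at hmono
  rw [ge_iff_le, one_div, inv_mul_le_iff₀ hmpos]
  linarith
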